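/- For ℓ = 1 at the point p = 1, the functions h₀(t) = -2t(log(t) - t + 1)/(t-1)² and h₁(t) = 2(t·log(t) - t + 1)/(t-1)² satisfy the coupled system 4t²h_i'' - (8t²/(1-t))h_i' + (4t/(1-t)²)(h_{1-i} - h_i) = 0 for i = 0,1 on (0,1), and lim_{t→1⁻} h_i(t) = 1 for i = 0,1. -/

import Mathlib

open Set Filter

noncomputable def f₀ (t : ℝ) : ℝ := -2 * t * (Real.log t - t + 1) / (t - 1) ^ 2
noncomputable def f₁ (t : ℝ) : ℝ := 2 * (t * Real.log t - t + 1) / (t - 1) ^ 2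
noncomputable def g₀ (t : ℝ) : ℝ := (2 * (t + 1) * Real.log t - 4 * (t - 1)) / (t - 1) ^ 3
noncomputable def G₀ (t : ℝ) : ℝ :=
  ((2 * Real.log t + 2 * (t + 1) / t - 4) * (t - 1)
    - 3 * (2 * (t + 1) * Real.log t - 4 * (t - 1))) / (t - 1) ^ 4

/-- For `ℓ = 1`, `p = 1`: `h₀(t) = -2t(log t - t + 1)/(t-1)²` and
`h₁(t) = 2(t log t - t + 1)/(t-1)²` satisfy the coupled system
`4t²hᵢ'' - (8t²/(1-t))hᵢ' + (4t/(1-t)²)(h_{1-i} - hᵢ) = 0` on `(0,1)`, and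
both tend to `1` as `t → 1⁻`. -/
theorem stmt11 (h₀ h₁ : ℝ → ℝ)
    (hh₀ : ∀ t ∈ Ioo (0 : ℝ) 1, h₀ t = -2 * t * (Real.log t - t + 1) / (t - 1) ^ 2)
    (hh₁ : ∀ t ∈ Ioo (0 : ℝ) 1, h₁ t = 2 * (t * Real.log t - t + 1) / (t - 1) ^ 2) :
    (∀ t ∈ Ioo (0 : ℝ) 1,
      4 * t ^ 2 * deriv (deriv h₀) t - (8 * t ^ 2 / (1 - t)) * deriv h₀ t
        + (4 * t / (1 - t) ^ 2) * (h₁ t - h₀ t) = 0) ∧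
    (∀ t ∈ Ioo (0 : ℝ) 1,
      4 * t ^ 2 * deriv (deriv h₁) t - (8 * t ^ 2 / (1 - t)) * deriv h₁ t
        + (4 * t / (1 - t) ^ 2) * (h₀ t - h₁ t) = 0) ∧
    Tendsto h₀ (nhdsWithin 1 (Iio 1)) (nhds 1) ∧
    Tendsto h₁ (nhdsWithin 1 (Iio 1)) (nhds 1) := by
  -- derivative computations on Ioo 0 1
  have hd0 : ∀ t ∈ Ioo (0:ℝ) 1, HasDerivAt f₀ (g₀ t) t := by
    intro t ht; obtain ⟨h0, h1⟩ := ht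
    have ht0 : t ≠ 0 := ne_of_gt h0
    have ht1 : t - 1 ≠ 0 := by nlinarith
    have hn : HasDerivAt (fun t : ℝ => -2 * t * (Real.log t - t + 1))
        (-2 * (Real.log t - t + 1) + -2 * t * (1/t - 1)) t := by
      have : HasDerivAt (fun t : ℝ => Real.log t - t + 1) (1/t - 1) t := by
        simpa using ((Real.hasDerivAt_log ht0).sub (hasDerivAt_id t)).add_const 1
      simpa using (((hasDerivAt_id t).const_mul (-2 : ℝ)).fun_mul this)
    have hdd : HasDerivAt (fun t : ℝ => (t - 1) ^ 2) (2 * (t - 1)) t := by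
      simpa using ((hasDerivAt_id t).sub_const 1).fun_pow 2
    have := hn.div hdd (pow_ne_zero 2 ht1)
    exact this.congr_deriv (by unfold g₀; field_simp; ring)
  have hd1 : ∀ t ∈ Ioo (0:ℝ) 1, HasDerivAt f₁ (-g₀ t) t := by
    intro t ht; obtain ⟨h0, h1⟩ := ht
    have ht0 : t ≠ 0 := ne_of_gt h0
    have ht1 : t - 1 ≠ 0 := by nlinarith
    have hn : HasDerivAt (fun t : ℝ => 2 * (t * Real.log t - t + 1))
        (2 * ((Real.log t + t * (1/t)) - 1)) t := by
      have hl : HasDerivAt (fun t : ℝ => t * Real.log t) (Real.log t + t * (1/t)) t := by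
        simpa [mul_comm] using (hasDerivAt_id t).fun_mul (Real.hasDerivAt_log ht0)
      simpa using ((hl.sub (hasDerivAt_id t)).add_const 1).const_mul 2
    have hdd : HasDerivAt (fun t : ℝ => (t - 1) ^ 2) (2 * (t - 1)) t := by
      simpa using ((hasDerivAt_id t).sub_const 1).fun_pow 2
    have := hn.div hdd (pow_ne_zero 2 ht1)
    exact this.congr_deriv (by unfold g₀; field_simp; ring)
  have hdg : ∀ t ∈ Ioo (0:ℝ) 1, HasDerivAt g₀ (G₀ t) t := by
    intro t ht; obtain ⟨h0, h1⟩ := ht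
    have ht0 : t ≠ 0 := ne_of_gt h0
    have ht1 : t - 1 ≠ 0 := by nlinarith
    have hn : HasDerivAt (fun t : ℝ => 2 * (t + 1) * Real.log t - 4 * (t - 1))
        ((2 * Real.log t + 2 * (t + 1) * (1/t)) - 4) t := by
      have h1' : HasDerivAt (fun t : ℝ => 2 * (t + 1) * Real.log t)
          (2 * Real.log t + 2 * (t + 1) * (1/t)) t := by
        have : HasDerivAt (fun t : ℝ => 2 * (t + 1)) 2 t := by
          simpa using ((hasDerivAt_id t).add_const 1).const_mul 2
        simpa [mul_comm, add_comm] using this.fun_mul (Real.hasDerivAt_log ht0)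
      have h2' : HasDerivAt (fun t : ℝ => 4 * (t - 1)) 4 t := by
        simpa using ((hasDerivAt_id t).sub_const 1).const_mul 4
      exact h1'.sub h2'
    have hdd : HasDerivAt (fun t : ℝ => (t - 1) ^ 3) (3 * (t - 1) ^ 2) t := by
      simpa using ((hasDerivAt_id t).sub_const 1).fun_pow 3
    have := hn.div hdd (pow_ne_zero 3 ht1)
    exact this.congr_deriv (by unfold G₀; field_simp)
  -- deriv of h₀, h₁ on Ioo
  have hmem : ∀ t ∈ Ioo (0:ℝ) 1, Ioo (0:ℝ) 1 ∈ nhds t :=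
    fun t ht => isOpen_Ioo.mem_nhds ht
  have e0 : ∀ t ∈ Ioo (0:ℝ) 1, deriv h₀ t = g₀ t := by
    intro t ht
    have heq : h₀ =ᶠ[nhds t] f₀ := eventually_of_mem (hmem t ht) hh₀
    rw [heq.deriv_eq, (hd0 t ht).deriv]
  have e1 : ∀ t ∈ Ioo (0:ℝ) 1, deriv h₁ t = -g₀ t := by
    intro t ht
    have heq : h₁ =ᶠ[nhds t] f₁ := eventually_of_mem (hmem t ht) hh₁
    rw [heq.deriv_eq, (hd1 t ht).deriv]
  have E0 : ∀ t ∈ Ioo (0:ℝ) 1, deriv (deriv h₀) t = G₀ t := by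
    intro t ht
    have heq : deriv h₀ =ᶠ[nhds t] g₀ := eventually_of_mem (hmem t ht) e0
    rw [heq.deriv_eq, (hdg t ht).deriv]
  have E1 : ∀ t ∈ Ioo (0:ℝ) 1, deriv (deriv h₁) t = -G₀ t := by
    intro t ht
    have heq : deriv h₁ =ᶠ[nhds t] fun s => -g₀ s := eventually_of_mem (hmem t ht) e1
    rw [heq.deriv_eq, ((hdg t ht).fun_neg).deriv]
  have ode : ∀ t ∈ Ioo (0:ℝ) 1,
      4 * t ^ 2 * G₀ t - (8 * t ^ 2 / (1 - t)) * g₀ t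
        + (4 * t / (1 - t) ^ 2) * (f₁ t - f₀ t) = 0 := by
    intro t ht; obtain ⟨h0, h1⟩ := ht
    have ht0 : t ≠ 0 := ne_of_gt h0
    have ht1 : t - 1 ≠ 0 := by nlinarith
    have ht1' : 1 - t ≠ 0 := by nlinarith
    unfold f₀ f₁ g₀ G₀
    field_simp
    ring
  have lim0 : Tendsto h₀ (nhdsWithin 1 (Iio 1)) (nhds 1) := by
    have hIoo : Ioo (0:ℝ) 1 ∈ nhdsWithin (1:ℝ) (Iio 1) :=
      Ioo_mem_nhdsLT_of_mem (by constructor <;> norm_num)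
    have hid : Tendsto (fun x : ℝ => x) (nhdsWithin 1 (Iio 1)) (nhds 1) :=
      tendsto_id.mono_right nhdsWithin_le_nhds
    have hlog : Tendsto Real.log (nhdsWithin (1:ℝ) (Iio 1)) (nhds 0) := by
      have := (Real.continuousAt_log (one_ne_zero)).tendsto
      simpa using this.mono_left nhdsWithin_le_nhds
    have key : Tendsto (fun t : ℝ => (Real.log t - t + 1) / (t - 1) ^ 2)
        (nhdsWithin 1 (Iio 1)) (nhds (-(1/2))) := by
      apply HasDerivAt.lhopital_zero_nhdsLT
        (f' := fun x : ℝ => 1/x - 1) (g' := fun x : ℝ => 2 * (x - 1))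
      · filter_upwards [hIoo] with x hx
        have hx0 : x ≠ 0 := ne_of_gt hx.1
        simpa using ((Real.hasDerivAt_log hx0).sub (hasDerivAt_id x)).add_const 1
      · filter_upwards [hIoo] with x hx
        simpa using ((hasDerivAt_id x).sub_const 1).fun_pow 2
      · filter_upwards [hIoo] with x hx
        have : x - 1 ≠ 0 := by nlinarith [hx.2]
        positivity
      · have : Tendsto (fun x : ℝ => Real.log x - x + 1) (nhdsWithin 1 (Iio 1))
            (nhds (0 - 1 + 1)) :=
          (hlog.sub hid).add (tendsto_const_nhds (α := ℝ) (f := nhdsWithin 1 (Iio 1)) (x := 1))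
        simpa using this
      · have : Tendsto (fun x : ℝ => (x - 1) ^ 2) (nhdsWithin 1 (Iio 1)) (nhds ((1-1)^2)) :=
          ((hid.sub tendsto_const_nhds).pow 2)
        simpa using this
      · have h2 : Tendsto (fun x : ℝ => -1 / (2 * x)) (nhdsWithin 1 (Iio 1))
            (nhds (-(1/2))) := by
          have : Tendsto (fun x : ℝ => -1 / (2 * x)) (nhds (1:ℝ)) (nhds (-1 / (2 * 1))) := by
            apply Tendsto.div tendsto_const_nhds (tendsto_const_nhds.mul tendsto_id)
            norm_num
          have h3 := this.mono_left
            (nhdsWithin_le_nhds : nhdsWithin (1:ℝ) (Iio 1) ≤ nhds 1)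
          convert h3 using 2
          norm_num
        apply h2.congr'
        filter_upwards [hIoo] with x hx
        have hx0 : x ≠ 0 := ne_of_gt hx.1
        have hx1 : x - 1 ≠ 0 := by nlinarith [hx.2]
        field_simp
        ring
    have hlim : Tendsto (fun t : ℝ => -2 * t * ((Real.log t - t + 1) / (t - 1) ^ 2))
        (nhdsWithin 1 (Iio 1)) (nhds 1) := by
      have hc : Tendsto (fun _ : ℝ => (-2:ℝ)) (nhdsWithin 1 (Iio 1)) (nhds (-2)) :=
        tendsto_const_nhds
      have h4 := (hc.mul hid).mul key
      norm_num at h4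
      convert h4 using 2
      ring
    apply hlim.congr'
    filter_upwards [hIoo] with t ht
    rw [hh₀ t ht]; ring
  refine ⟨?_, ?_, lim0, ?_⟩
  · intro t ht
    rw [E0 t ht, e0 t ht, hh₀ t ht, hh₁ t ht]
    simpa [f₀, f₁] using ode t ht
  · intro t ht
    have := ode t ht
    rw [E1 t ht, e1 t ht, hh₀ t ht, hh₁ t ht]
    simp only [f₀, f₁] at this
    nlinarith [this]
  · -- limit of h₁ via h₀ + h₁ = 2
    have hIoo : Ioo (0:ℝ) 1 ∈ nhdsWithin (1:ℝ) (Iio 1) :=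
      Ioo_mem_nhdsLT_of_mem (by constructor <;> norm_num)
    have h2 : Tendsto (fun t => 2 - h₀ t) (nhdsWithin 1 (Iio 1)) (nhds 1) := by
      have hc : Tendsto (fun _ : ℝ => (2:ℝ)) (nhdsWithin 1 (Iio 1)) (nhds 2) :=
        tendsto_const_nhds
      have h5 := hc.sub lim0
      norm_num at h5
      exact h5
    apply h2.congr'
    filter_upwards [hIoo] with t ht
    have ht1 : t - 1 ≠ 0 := by nlinarith [ht.1, ht.2]
    rw [hh₀ t ht, hh₁ t ht]
    field_simp
    ring
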